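/- For a positive semidefinite matrix A, the maximum of x^T A x over unit-norm k-sparse vectors x is at least (k/n)·λ_1, where λ_1 is the largest eigenvalue of A. -/

import Mathlib

open Matrix BigOperators

/-- averaging: a k-subset with sum at least k/m of total -/
lemma aux_exists_subset {α : Type*} [DecidableEq α] (f : α → ℝ) :
    ∀ (k : ℕ) (T : Finset α), k ≤ T.card →
      ∃ S ⊆ T, S.card = k ∧ (k : ℝ) * ∑ i ∈ T, f i ≤ (T.card : ℝ) * ∑ i ∈ S, f i := by
  intro k
  induction k with
  | zero =>
    intro T _
    exact ⟨∅, Finset.empty_subset T, rfl, by simp⟩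
  | succ k ih =>
    intro T hT
    have hTne : T.Nonempty := Finset.card_pos.mp (by omega)
    obtain ⟨t, htT, hmax⟩ := Finset.exists_max_image T f hTne
    have h1 : ∑ i ∈ T, f i ≤ (T.card : ℝ) * f t := by
      have := Finset.sum_le_card_nsmul T f (f t) (fun i hi => hmax i hi)
      simpa [nsmul_eq_mul] using this
    have hcard : k ≤ (T.erase t).card := by
      rw [Finset.card_erase_of_mem htT]; omega
    obtain ⟨S', hS'sub, hS'card, hS'⟩ := ih (T.erase t) hcard
    refine ⟨insert t S', ?_, ?_, ?_⟩
    · exact Finset.insert_subset htT (hS'sub.trans (Finset.erase_subset t T))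
    · rw [Finset.card_insert_of_notMem (fun h => (Finset.mem_erase.mp (hS'sub h)).1 rfl), hS'card]
    · have htS' : t ∉ S' := fun h => (Finset.mem_erase.mp (hS'sub h)).1 rfl
      rw [Finset.sum_insert htS']
      have herase : ∑ i ∈ T.erase t, f i = ∑ i ∈ T, f i - f t := by
        rw [Finset.sum_erase_eq_sub htT]
      rw [herase, Finset.card_erase_of_mem htT] at hS'
      set m : ℕ := T.card with hm
      have hm1 : 1 ≤ m := by omega
      have hmk : k + 1 ≤ m := hT
      rcases Nat.lt_or_ge k (m - 1) with hlt | hge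
      · -- m - 1 > k, in particular m ≥ 2
        have hm2 : 2 ≤ m := by omega
        have hcast : ((m - 1 : ℕ) : ℝ) = (m : ℝ) - 1 := by
          push_cast [Nat.cast_sub hm1]; ring
        rw [hcast] at hS'
        set M := (m : ℝ)
        set K := (k : ℝ)
        set tot := ∑ i ∈ T, f i
        set s' := ∑ i ∈ S', f i
        have hMK : K + 1 ≤ M := by
          have : ((k+1 : ℕ) : ℝ) ≤ (m : ℝ) := Nat.cast_le.mpr hmk
          push_cast at this; linarith
        have hM2 : (2 : ℝ) ≤ M := by
          have : ((2 : ℕ) : ℝ) ≤ (m : ℝ) := Nat.cast_le.mpr hm2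
          push_cast at this; linarith
        -- key products
        have p1 : 0 ≤ (M - 1 - K) * (M * f t - tot) := by
          have hKM : ((k+1:ℕ) : ℝ) ≤ ((m-1:ℕ) : ℝ) := Nat.cast_le.mpr (by omega)
          rw [hcast] at hKM
          push_cast at hKM
          exact mul_nonneg (by linarith) (by linarith)
        have p2 : M * (K * (tot - f t)) ≤ M * ((M - 1) * s') :=
          mul_le_mul_of_nonneg_left hS' (by linarith)
        push_cast
        nlinarith [p1, p2, h1]
      · -- k ≥ m - 1, so k = m - 1 and m = k + 1, S' = erase, need (k+1)tot ≤ m(ft+s')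
        have hkm : m = k + 1 := by omega
        have hScard' : S'.card = (T.erase t).card := by
          rw [hS'card, Finset.card_erase_of_mem htT]; omega
        have hSeq : S' = T.erase t := Finset.eq_of_subset_of_card_le hS'sub (le_of_eq hScard'.symm)
        rw [hSeq, herase, hkm]
        push_cast; ring_nf; linarith [le_refl (0:ℝ)]

/-- symmetry of the quadratic form -/
lemma aux_symm {n : ℕ} {A : Matrix (Fin n) (Fin n) ℝ} (hA : A.IsHermitian)
    (u w : Fin n → ℝ) : u ⬝ᵥ A.mulVec w = w ⬝ᵥ A.mulVec u := by
  have hAt : Aᵀ = A := by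
    have := hA.eq
    rwa [conjTranspose_eq_transpose_of_trivial] at this
  rw [Matrix.dotProduct_mulVec, ← Matrix.mulVec_transpose, hAt, dotProduct_comm]

/-- Cauchy–Schwarz for PSD quadratic form -/
lemma aux_cs {n : ℕ} {A : Matrix (Fin n) (Fin n) ℝ} (hA : A.PosSemidef)
    (u w : Fin n → ℝ) :
    (u ⬝ᵥ A.mulVec w) ^ 2 ≤ (u ⬝ᵥ A.mulVec u) * (w ⬝ᵥ A.mulVec w) := by
  have hq : ∀ t : ℝ, 0 ≤ (w ⬝ᵥ A.mulVec w) * (t * t) + (2 * (u ⬝ᵥ A.mulVec w)) * t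
      + (u ⬝ᵥ A.mulVec u) := by
    intro t
    have h0 : 0 ≤ (u + t • w) ⬝ᵥ A.mulVec (u + t • w) := by
      have := hA.dotProduct_mulVec_nonneg (u + t • w)
      simpa using this
    have hsym := aux_symm hA.1 u w
    rw [Matrix.mulVec_add, Matrix.mulVec_smul, dotProduct_add, add_dotProduct,
      add_dotProduct, dotProduct_smul, smul_dotProduct, smul_dotProduct,
      dotProduct_smul] at h0
    rw [hsym] at h0
    simp only [smul_eq_mul] at h0
    rw [hsym]
    ring_nf at h0 ⊢
    linarith [h0]
  have := discrim_le_zero hq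
  rw [discrim] at this
  nlinarith [this]

theorem stmt_1 {n k : ℕ} (A : Matrix (Fin n) (Fin n) ℝ)
    (lam1 : ℝ) (v1 : Fin n → ℝ)
    (hPSD : A.PosSemidef)
    (hv1_unit : ∑ i, v1 i ^ 2 = 1)
    (hv1_eig : A.mulVec v1 = lam1 • v1)
    (hlam1_max : ∀ (μ : ℝ) (w : Fin n → ℝ), w ≠ 0 → A.mulVec w = μ • w → μ ≤ lam1)
    (hk1 : 1 ≤ k) (hkn : k ≤ n) :
    ∃ x : Fin n → ℝ, (∑ i, x i ^ 2 = 1) ∧ (Function.support x).ncard ≤ k ∧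
      ((k : ℝ) / n) * lam1 ≤ x ⬝ᵥ A.mulVec x := by
  have hn1 : 1 ≤ n := le_trans hk1 hkn
  have hnpos : (0:ℝ) < n := by exact_mod_cast Nat.lt_of_lt_of_le Nat.zero_lt_one hn1
  have hkpos : (0:ℝ) < k := by exact_mod_cast hk1
  obtain ⟨S, -, hScard, hSsum⟩ := aux_exists_subset (fun i => v1 i ^ 2) k
    (Finset.univ : Finset (Fin n)) (by simpa using hkn)
  simp only [Finset.card_univ, Fintype.card_fin, hv1_unit, mul_one] at hSsum
  set c : ℝ := ∑ i ∈ S, v1 i ^ 2 with hc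
  have hc_ge : (k : ℝ) / n ≤ c := by
    rw [div_le_iff₀ hnpos]; linarith [hSsum]
  have hcpos : 0 < c := lt_of_lt_of_le (div_pos hkpos hnpos) hc_ge
  set u : Fin n → ℝ := fun i => if i ∈ S then v1 i else 0 with hu
  have husq : ∑ i, u i ^ 2 = c := by
    rw [hc]
    calc ∑ i, u i ^ 2 = ∑ i, if i ∈ S then v1 i ^ 2 else 0 := by
          apply Finset.sum_congr rfl; intro i _
          by_cases hi : i ∈ S <;> simp [hu, hi]
      _ = ∑ i ∈ S, v1 i ^ 2 := by rw [Finset.sum_ite_mem, Finset.univ_inter]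
  -- eigen relation
  have hv1v1 : v1 ⬝ᵥ v1 = 1 := by
    rw [dotProduct]; rw [← hv1_unit]; congr 1; ext i; ring
  have hlam_eq : v1 ⬝ᵥ A.mulVec v1 = lam1 := by
    rw [hv1_eig, dotProduct_smul, smul_eq_mul, hv1v1, mul_one]
  have hlam_nonneg : 0 ≤ lam1 := by
    rw [← hlam_eq]; simpa using hPSD.dotProduct_mulVec_nonneg v1
  have huv1 : u ⬝ᵥ v1 = c := by
    rw [dotProduct, hc]
    calc ∑ i, u i * v1 i = ∑ i, if i ∈ S then v1 i ^ 2 else 0 := by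
          apply Finset.sum_congr rfl; intro i _
          by_cases hi : i ∈ S <;> simp [hu, hi, sq]
      _ = ∑ i ∈ S, v1 i ^ 2 := by rw [Finset.sum_ite_mem, Finset.univ_inter]
  have huAv : u ⬝ᵥ A.mulVec v1 = lam1 * c := by
    rw [hv1_eig, dotProduct_smul, smul_eq_mul, huv1]
  set a : ℝ := u ⬝ᵥ A.mulVec u with ha
  have ha_nonneg : 0 ≤ a := by simpa [ha] using hPSD.dotProduct_mulVec_nonneg u
  have hcs : (lam1 * c) ^ 2 ≤ a * lam1 := by
    have h := aux_cs hPSD u v1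
    rw [huAv, hlam_eq] at h
    rw [ha]
    exact h
  have hkey : lam1 * c ^ 2 ≤ a := by
    rcases eq_or_lt_of_le hlam_nonneg with h0 | hpos
    · rw [← h0]; simpa using ha_nonneg
    · nlinarith [hcs, hpos]
  -- the candidate vector
  have hsc : Real.sqrt c > 0 := Real.sqrt_pos.mpr hcpos
  refine ⟨fun i => (Real.sqrt c)⁻¹ * u i, ?_, ?_, ?_⟩
  · have : ∑ i, ((Real.sqrt c)⁻¹ * u i) ^ 2 = ((Real.sqrt c)⁻¹)^2 * ∑ i, u i ^ 2 := by
      rw [Finset.mul_sum]; congr 1; ext i; ring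
    rw [this, husq, inv_pow, Real.sq_sqrt hcpos.le, inv_mul_cancel₀ (ne_of_gt hcpos)]
  · have hsub : Function.support (fun i => (Real.sqrt c)⁻¹ * u i) ⊆ (S : Set (Fin n)) := by
      intro i hi
      by_contra hiS
      apply hi
      have hiS' : i ∉ S := by simpa using hiS
      simp [hu, hiS']
    calc (Function.support fun i => (Real.sqrt c)⁻¹ * u i).ncard
        ≤ (S : Set (Fin n)).ncard := Set.ncard_le_ncard hsub (S.finite_toSet)
      _ = S.card := Set.ncard_coe_finset S
      _ = k := hScard
  · have hquad : (fun i => (Real.sqrt c)⁻¹ * u i) ⬝ᵥ A.mulVec (fun i => (Real.sqrt c)⁻¹ * u i)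
        = ((Real.sqrt c)⁻¹)^2 * a := by
      have hfun : (fun i => (Real.sqrt c)⁻¹ * u i) = (Real.sqrt c)⁻¹ • u := by
        ext i; simp [smul_eq_mul]
      rw [hfun, Matrix.mulVec_smul, smul_dotProduct, dotProduct_smul, ha]
      simp [smul_eq_mul]; ring
    rw [hquad, inv_pow, Real.sq_sqrt hcpos.le]
    have h1 : lam1 * c ≤ a / c := by
      rw [le_div_iff₀ hcpos]; nlinarith [hkey]
    have h2 : (k : ℝ)/n * lam1 ≤ lam1 * c := by nlinarith [hc_ge, hlam_nonneg]
    calc (k:ℝ)/n * lam1 ≤ lam1 * c := h2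
      _ ≤ a / c := h1
      _ = c⁻¹ * a := by rw [div_eq_mul_inv, mul_comm]
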